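/- As a → ∞ one has (∫_{-1}^{1} e^{iθ} √(p_a(t)) dt)² ~ (π²/4) a e^{2iθ}. Consequently, any unbounded arc of the level set Σ_θ = {a : Re ∫_{-1}^{1} e^{iθ}√(p_a(t)) dt = 0} escapes to infinity in the asymptotic direction arg a → π - 2θ. -/

import Mathlib

open Complex Set intervalIntegral Filter Topology

noncomputable section

/-- `p_a(z) = (z - a)(z² - 1)`. -/
def pa (a z : ℂ) : ℂ := (z - a) * (z ^ 2 - 1)

def csqrt (z : ℂ) : ℂ := z ^ (1/2 : ℂ)

lemma csqrt_sq (z : ℂ) : csqrt z ^ 2 = z := by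
  rcases eq_or_ne z 0 with h | h
  · simp [csqrt, h, Complex.zero_cpow (by norm_num : (1/2:ℂ) ≠ 0)]
  · rw [csqrt, sq, ← Complex.cpow_add _ _ h]; norm_num

lemma csqrt_ne_zero {z : ℂ} (h : z ≠ 0) : csqrt z ≠ 0 := by
  intro h0
  apply h
  rw [← csqrt_sq z, h0]; ring

lemma re_csqrt_nonneg (z : ℂ) : 0 ≤ (csqrt z).re := by
  rcases eq_or_ne z 0 with h | h
  · simp [csqrt, h, Complex.zero_cpow (by norm_num : (1/2:ℂ) ≠ 0)]
  · rw [csqrt, Complex.cpow_def_of_ne_zero h, Complex.exp_re]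
    apply mul_nonneg (Real.exp_nonneg _)
    apply Real.cos_nonneg_of_mem_Icc
    have h1 : (Complex.log z * (1/2 : ℂ)).im = z.arg / 2 := by
      simp [Complex.mul_im, Complex.log_im]
      ring
    rw [h1]
    constructor
    · have := Complex.neg_pi_lt_arg z; linarith
    · have := Complex.arg_le_pi z; linarith

lemma norm_csqrt_sub_one_le (z : ℂ) : ‖csqrt z - 1‖ ≤ ‖z - 1‖ := by
  have key : (csqrt z - 1) * (csqrt z + 1) = z - 1 := by
    have := csqrt_sq z; linear_combination this
  have h1 : (1:ℝ) ≤ ‖csqrt z + 1‖ := by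
    have : (1:ℝ) ≤ (csqrt z + 1).re := by
      simp only [Complex.add_re, Complex.one_re]
      linarith [re_csqrt_nonneg z]
    calc (1:ℝ) ≤ (csqrt z + 1).re := this
      _ ≤ |(csqrt z + 1).re| := le_abs_self _
      _ ≤ ‖csqrt z + 1‖ := by exact Complex.abs_re_le_norm _
  calc ‖csqrt z - 1‖ = ‖csqrt z - 1‖ * 1 := (mul_one _).symm
    _ ≤ ‖csqrt z - 1‖ * ‖csqrt z + 1‖ := by
        apply mul_le_mul_of_nonneg_left h1 (norm_nonneg _)
    _ = ‖(csqrt z - 1) * (csqrt z + 1)‖ := (norm_mul _ _).symm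
    _ = ‖z - 1‖ := by rw [key]

lemma csqrt_diff_le {u v : ℂ} (hu : ‖u - 1‖ ≤ 1/2) (hv : ‖v - 1‖ ≤ 1/2) :
    ‖csqrt u - csqrt v‖ ≤ ‖u - v‖ := by
  have key : (csqrt u - csqrt v) * (csqrt u + csqrt v) = u - v := by
    linear_combination csqrt_sq u - csqrt_sq v
  have h1 : (1:ℝ) ≤ ‖csqrt u + csqrt v‖ := by
    have e : csqrt u + csqrt v = 2 + (csqrt u - 1) + (csqrt v - 1) := by ring
    have h2 : ‖csqrt u - 1‖ ≤ 1/2 := le_trans (norm_csqrt_sub_one_le u) hu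
    have h3 : ‖csqrt v - 1‖ ≤ 1/2 := le_trans (norm_csqrt_sub_one_le v) hv
    have hns : ‖(2:ℂ)‖ - ‖-((csqrt u - 1) + (csqrt v - 1))‖ ≤
        ‖(2:ℂ) - (-((csqrt u - 1) + (csqrt v - 1)))‖ := norm_sub_norm_le _ _
    rw [norm_neg, sub_neg_eq_add] at hns
    have h4 : ‖(csqrt u - 1) + (csqrt v - 1)‖ ≤ 1 := by
      calc ‖(csqrt u - 1) + (csqrt v - 1)‖ ≤ ‖csqrt u - 1‖ + ‖csqrt v - 1‖ := norm_add_le _ _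
        _ ≤ 1 := by linarith
    have h6 : ‖(2:ℂ)‖ = 2 := by norm_num
    have h7 : (2:ℂ) + ((csqrt u - 1) + (csqrt v - 1)) = 2 + (csqrt u - 1) + (csqrt v - 1) := by ring
    rw [h7] at hns
    rw [e]
    linarith
  calc ‖csqrt u - csqrt v‖ = ‖csqrt u - csqrt v‖ * 1 := (mul_one _).symm
    _ ≤ ‖csqrt u - csqrt v‖ * ‖csqrt u + csqrt v‖ :=
        mul_le_mul_of_nonneg_left h1 (norm_nonneg _)
    _ = ‖(csqrt u - csqrt v) * (csqrt u + csqrt v)‖ := (norm_mul _ _).symm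
    _ = ‖u - v‖ := by rw [key]

lemma csqrt_conj {z : ℂ} (h : z ∈ Complex.slitPlane) :
    csqrt ((starRingEnd ℂ) z) = (starRingEnd ℂ) (csqrt z) := by
  have hz : z ≠ 0 := Complex.slitPlane_ne_zero h
  have harg : z.arg ≠ Real.pi := Complex.slitPlane_arg_ne_pi h
  have hz' : (starRingEnd ℂ) z ≠ 0 := by simpa using hz
  rw [csqrt, csqrt, Complex.cpow_def_of_ne_zero hz', Complex.cpow_def_of_ne_zero hz,
    Complex.log_conj _ harg, ← Complex.exp_conj]
  congr 1
  have hhalf : (starRingEnd ℂ) (1/2 : ℂ) = 1/2 := by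
    rw [Complex.conj_eq_iff_im]; simp
  rw [map_mul, hhalf]

lemma csqrt_ofReal {x : ℝ} (hx : 0 ≤ x) : csqrt (x : ℂ) = (Real.sqrt x : ℂ) := by
  rw [csqrt, Real.sqrt_eq_rpow, Complex.ofReal_cpow hx]
  norm_num

def Jint (a : ℂ) : ℂ :=
  ∫ t in (-1:ℝ)..1, ((Real.sqrt (1 - t^2) : ℂ) * csqrt (1 - (t:ℂ) / a))

section Jfacts

variable {a : ℂ} (ha : 2 ≤ ‖a‖)

lemma ha_ne (ha : 2 ≤ ‖a‖) : a ≠ 0 := by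
  intro h; rw [h] at ha; simp at ha; linarith

lemma base_dist {t : ℝ} (ht : |t| ≤ 1) (ha : 2 ≤ ‖a‖) :
    ‖(1 - (t:ℂ)/a) - 1‖ ≤ 1/2 := by
  have hane := ha_ne ha
  have : (1 - (t:ℂ)/a) - 1 = -((t:ℂ)/a) := by ring
  rw [this, norm_neg, norm_div]
  rw [Complex.norm_real]
  have h2 : (0:ℝ) < ‖a‖ := by linarith
  rw [div_le_iff₀ h2]
  calc |t| ≤ 1 := ht
    _ ≤ 1/2 * 2 := by norm_num
    _ ≤ 1/2 * ‖a‖ := by linarith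

lemma base_mem {t : ℝ} (ht : |t| ≤ 1) (ha : 2 ≤ ‖a‖) :
    (1 - (t:ℂ)/a) ∈ Complex.slitPlane := by
  left
  have hd := base_dist ht ha
  have hre : |((t:ℂ)/a).re| ≤ 1/2 := by
    calc |((t:ℂ)/a).re| ≤ ‖(t:ℂ)/a‖ := by
          exact Complex.abs_re_le_norm _
      _ = ‖1 - (t:ℂ)/a - 1‖ := by rw [show (1:ℂ) - (t:ℂ)/a - 1 = -((t:ℂ)/a) by ring, norm_neg]
      _ ≤ 1/2 := hd
  have h2 := abs_le.mp hre
  simp only [Complex.sub_re, Complex.one_re]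
  linarith [h2.1, h2.2]

lemma base_ne {t : ℝ} (ht : |t| ≤ 1) (ha : 2 ≤ ‖a‖) : (1 - (t:ℂ)/a) ≠ 0 :=
  Complex.slitPlane_ne_zero (base_mem ht ha)

lemma cont_integrand (ha : 2 ≤ ‖a‖) :
    ContinuousOn (fun t : ℝ => ((Real.sqrt (1 - t^2) : ℂ) * csqrt (1 - (t:ℂ) / a)))
      (Icc (-1:ℝ) 1) := by
  apply ContinuousOn.mul
  · apply Continuous.continuousOn
    exact Complex.continuous_ofReal.comp (Real.continuous_sqrt.comp (by continuity))
  · intro t ht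
    apply ContinuousWithinAt.mono _ (subset_univ _)
    rw [continuousWithinAt_univ]
    have habs : |t| ≤ 1 := abs_le.mpr ⟨ht.1, ht.2⟩
    have hc : ContinuousAt (fun z : ℂ => csqrt z) (1 - (t:ℂ)/a) :=
      continuousAt_cpow_const (base_mem habs ha)
    have h2 : ContinuousAt (fun x : ℝ => 1 - (x:ℂ)/a) t :=
      ContinuousAt.sub continuousAt_const ((Complex.continuous_ofReal.continuousAt).div_const a)
    have h3 := ContinuousAt.comp (g := fun z : ℂ => csqrt z)
      (f := fun x : ℝ => 1 - (x:ℂ)/a) (x := t) hc h2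
    simpa [Function.comp_def] using h3

lemma integrable_integrand (ha : 2 ≤ ‖a‖) :
    IntervalIntegrable (fun t : ℝ => ((Real.sqrt (1 - t^2) : ℂ) * csqrt (1 - (t:ℂ) / a)))
      MeasureTheory.volume (-1:ℝ) 1 := by
  apply ContinuousOn.intervalIntegrable
  rw [Set.uIcc_of_le (by norm_num : (-1:ℝ) ≤ 1)]
  exact cont_integrand ha

lemma J_est (ha : 2 ≤ ‖a‖) : ‖Jint a - ((Real.pi/2 : ℝ) : ℂ)‖ ≤ 2/‖a‖ := by
  have hsqrt_int : IntervalIntegrable (fun t : ℝ => ((Real.sqrt (1 - t^2) : ℂ)))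
      MeasureTheory.volume (-1:ℝ) 1 := by
    apply Continuous.intervalIntegrable
    exact Complex.continuous_ofReal.comp (Real.continuous_sqrt.comp (by continuity))
  have h1 : ((Real.pi/2 : ℝ) : ℂ) = ∫ t in (-1:ℝ)..1, ((Real.sqrt (1 - t^2) : ℂ)) := by
    rw [intervalIntegral.integral_ofReal, integral_sqrt_one_sub_sq]
  have hsub : Jint a - ((Real.pi/2 : ℝ) : ℂ) =
      ∫ t in (-1:ℝ)..1, ((Real.sqrt (1 - t^2) : ℂ) * (csqrt (1 - (t:ℂ)/a) - 1)) := by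
    rw [h1, Jint, ← intervalIntegral.integral_sub (integrable_integrand ha) hsqrt_int]
    congr 1
    ext t
    ring
  rw [hsub]
  have hb := intervalIntegral.norm_integral_le_of_norm_le_const (C := 1/‖a‖)
    (f := fun t : ℝ => ((Real.sqrt (1 - t^2) : ℂ) * (csqrt (1 - (t:ℂ)/a) - 1)))
    (a := (-1:ℝ)) (b := 1) ?_
  · calc ‖∫ t in (-1:ℝ)..1, ((Real.sqrt (1 - t^2) : ℂ) * (csqrt (1 - (t:ℂ)/a) - 1))‖
        ≤ 1/‖a‖ * |1 - (-1)| := hb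
      _ = 2/‖a‖ := by rw [show |(1:ℝ) - (-1)| = 2 by norm_num]; ring
  · intro t ht
    rw [Set.uIoc_of_le (by norm_num : (-1:ℝ) ≤ 1)] at ht
    have habs : |t| ≤ 1 := abs_le.mpr ⟨le_of_lt ht.1, ht.2⟩
    have hpos : (0:ℝ) < ‖a‖ := by linarith
    rw [norm_mul, Complex.norm_real]
    have hs1 : ‖Real.sqrt (1 - t^2)‖ ≤ 1 := by
      rw [Real.norm_eq_abs, _root_.abs_of_nonneg (Real.sqrt_nonneg _)]
      have hle : (1 - t^2) ≤ 1 := by nlinarith [_root_.sq_abs t]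
      calc Real.sqrt (1 - t^2) ≤ Real.sqrt 1 := Real.sqrt_le_sqrt hle
        _ = 1 := Real.sqrt_one
    have hs2 : ‖csqrt (1 - (t:ℂ)/a) - 1‖ ≤ 1/‖a‖ := by
      calc ‖csqrt (1 - (t:ℂ)/a) - 1‖ ≤ ‖(1 - (t:ℂ)/a) - 1‖ := norm_csqrt_sub_one_le _
        _ = |t|/‖a‖ := by
            rw [show (1 - (t:ℂ)/a) - 1 = -((t:ℂ)/a) by ring, norm_neg, norm_div,
              Complex.norm_real, Real.norm_eq_abs]
        _ ≤ 1/‖a‖ := by gcongr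
    calc ‖Real.sqrt (1 - t^2)‖ * ‖csqrt (1 - (t:ℂ)/a) - 1‖ ≤ 1 * (1/‖a‖) := by
          apply mul_le_mul hs1 hs2 (norm_nonneg _) (by norm_num)
      _ = 1/‖a‖ := one_mul _

end Jfacts


lemma w_sq {a : ℂ} (ha : 2 ≤ ‖a‖) {t : ℝ} (ht : t ∈ Icc (-1:ℝ) 1) :
    (csqrt a * ((Real.sqrt (1 - t^2) : ℂ) * csqrt (1 - (t:ℂ)/a)))^2 = pa a t := by
  have habs : |t| ≤ 1 := abs_le.mpr ⟨ht.1, ht.2⟩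
  have h1 : ((Real.sqrt (1 - t^2) : ℂ))^2 = ((1 - t^2 : ℝ) : ℂ) := by
    rw [← Complex.ofReal_pow, Real.sq_sqrt (by nlinarith [_root_.sq_abs t, mul_le_mul habs habs (abs_nonneg t) (by norm_num : (0:ℝ) ≤ 1)])]
  rw [mul_pow, mul_pow, csqrt_sq, h1, csqrt_sq, pa]
  have hane := ha_ne ha
  push_cast
  field_simp
  ring

lemma branch_int {a : ℂ} (ha : 2 ≤ ‖a‖) {f : ℝ → ℂ}
    (hfc : ContinuousOn f (Icc (-1:ℝ) 1))
    (hfsq : ∀ t ∈ Icc (-1:ℝ) 1, f t ^ 2 = pa a t) :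
    ∃ e : ℂ, e ^ 2 = 1 ∧ (∫ t in (-1:ℝ)..1, f t) = e * (csqrt a * Jint a) := by
  set w : ℝ → ℂ := fun t => csqrt a * ((Real.sqrt (1 - t^2) : ℂ) * csqrt (1 - (t:ℂ)/a)) with hw
  have hane := ha_ne ha
  have hwne : ∀ t ∈ Ioo (-1:ℝ) 1, w t ≠ 0 := by
    intro t ht
    have habs : |t| ≤ 1 := abs_le.mpr ⟨le_of_lt ht.1, le_of_lt ht.2⟩
    apply mul_ne_zero (csqrt_ne_zero hane)
    apply mul_ne_zero
    · simp only [ne_eq, Complex.ofReal_eq_zero]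
      intro h0
      have h2 := Real.sqrt_eq_zero'.mp h0
      nlinarith [ht.1, ht.2]
    · exact csqrt_ne_zero (base_ne habs ha)
  have hwc : ContinuousOn w (Icc (-1:ℝ) 1) := continuousOn_const.mul (cont_integrand ha)
  have hcases : ∀ t ∈ Ioo (-1:ℝ) 1, f t = w t ∨ f t = -w t := by
    intro t ht
    have ht' : t ∈ Icc (-1:ℝ) 1 := Ioo_subset_Icc_self ht
    have h1 : f t ^ 2 = w t ^ 2 := by rw [hfsq t ht', hw]; exact (w_sq ha ht').symm
    have h2 : (f t - w t) * (f t + w t) = 0 := by linear_combination h1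
    rcases mul_eq_zero.mp h2 with h | h
    · left; linear_combination h
    · right; linear_combination h
  have hsign : (∀ t ∈ Ioo (-1:ℝ) 1, f t = w t) ∨ (∀ t ∈ Ioo (-1:ℝ) 1, f t = -w t) := by
    by_contra hcon
    push_neg at hcon
    obtain ⟨⟨t₀, ht₀, hft₀⟩, ⟨t₁, ht₁, hft₁⟩⟩ := hcon
    have h₀ : f t₀ = -w t₀ := (hcases t₀ ht₀).resolve_left hft₀
    have h₁ : f t₁ = w t₁ := (hcases t₁ ht₁).resolve_right hft₁
    set h : ℝ → ℝ := fun t => ((f t) / (w t)).re with hh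
    have hIcc : uIcc t₀ t₁ ⊆ Ioo (-1:ℝ) 1 :=
      (Set.ordConnected_Ioo).uIcc_subset ht₀ ht₁
    have hhc : ContinuousOn h (uIcc t₀ t₁) := by
      apply Complex.continuous_re.comp_continuousOn
      exact ContinuousOn.div (hfc.mono (hIcc.trans Ioo_subset_Icc_self))
        (hwc.mono (hIcc.trans Ioo_subset_Icc_self)) (fun t ht => hwne t (hIcc ht))
    have h0mem : (0:ℝ) ∈ uIcc (h t₀) (h t₁) := by
      have e0 : h t₀ = -1 := by
        rw [hh]; simp only; rw [h₀, neg_div, div_self (hwne t₀ ht₀)]; simp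
      have e1 : h t₁ = 1 := by
        rw [hh]; simp only; rw [h₁, div_self (hwne t₁ ht₁)]; simp
      rw [e0, e1, Set.uIcc_of_le (by norm_num : (-1:ℝ) ≤ 1)]
      norm_num
    obtain ⟨t₂, ht₂, hht₂⟩ := intermediate_value_uIcc hhc h0mem
    rcases hcases t₂ (hIcc ht₂) with hc | hc <;>
      rw [hh] at hht₂ <;> simp only at hht₂
    · rw [hc, div_self (hwne t₂ (hIcc ht₂))] at hht₂; simp at hht₂
    · rw [hc, neg_div, div_self (hwne t₂ (hIcc ht₂))] at hht₂; simp at hht₂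
  have key : ∀ e : ℂ, e^2 = 1 → (∀ t ∈ Ioo (-1:ℝ) 1, f t = e * w t) →
      (∫ t in (-1:ℝ)..1, f t) = e * (csqrt a * Jint a) := by
    intro e he heq
    have hae : ∀ᵐ t ∂(MeasureTheory.volume), t ∈ Set.uIoc (-1:ℝ) 1 → f t = e * w t := by
      have h1 : ∀ᵐ (t:ℝ) ∂MeasureTheory.volume, t ≠ (1:ℝ) := by
        rw [MeasureTheory.ae_iff]
        have : {t : ℝ | ¬ t ≠ 1} = {1} := by ext x; simp
        rw [this]
        exact Real.volume_singleton
      filter_upwards [h1] with t ht1 htm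
      rw [Set.uIoc_of_le (by norm_num : (-1:ℝ) ≤ 1)] at htm
      exact heq t ⟨htm.1, lt_of_le_of_ne htm.2 ht1⟩
    have h2 : (∫ t in (-1:ℝ)..1, f t) = ∫ t in (-1:ℝ)..1, e * w t :=
      intervalIntegral.integral_congr_ae hae
    have h3 : ∫ t in (-1:ℝ)..1, w t = csqrt a * Jint a := by
      rw [Jint, ← intervalIntegral.integral_const_mul]
    rw [h2, intervalIntegral.integral_const_mul, h3]
  rcases hsign with hs | hs
  · exact ⟨1, by norm_num, key 1 (by norm_num)
      (fun t ht => by rw [one_mul]; exact hs t ht)⟩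
  · exact ⟨-1, by norm_num, key (-1) (by norm_num)
      (fun t ht => by rw [neg_one_mul]; exact hs t ht)⟩

lemma intervalIntegral_conj {f : ℝ → ℂ} {a b : ℝ} :
    (∫ t in a..b, (starRingEnd ℂ) (f t)) = (starRingEnd ℂ) (∫ t in a..b, f t) := by
  simp only [intervalIntegral, integral_conj, ← map_sub]

lemma J_conj {a : ℂ} (ha : 2 ≤ ‖a‖) :
    Jint ((starRingEnd ℂ) a) = (starRingEnd ℂ) (Jint a) := by
  rw [Jint, Jint, ← intervalIntegral_conj]
  apply intervalIntegral.integral_congr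
  intro t ht
  rw [Set.uIcc_of_le (by norm_num : (-1:ℝ) ≤ 1)] at ht
  have habs : |t| ≤ 1 := abs_le.mpr ⟨ht.1, ht.2⟩
  simp only
  rw [map_mul, Complex.conj_ofReal, ← csqrt_conj (base_mem habs ha)]
  congr 2
  rw [map_sub, map_one, map_div₀, Complex.conj_ofReal]

lemma norm_conj' (a : ℂ) : ‖(starRingEnd ℂ) a‖ = ‖a‖ := by
  rw [Complex.norm_conj]

lemma J_diff {a : ℂ} (ha : 16 ≤ ‖a‖) :
    ‖Jint a - Jint ((starRingEnd ℂ) a)‖ ≤ 2 * (‖a - (starRingEnd ℂ) a‖ / ‖a‖^2) := by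
  have ha2 : 2 ≤ ‖a‖ := by linarith
  have ha2' : 2 ≤ ‖(starRingEnd ℂ) a‖ := by rw [norm_conj']; linarith
  have hane := ha_ne ha2
  have hane' := ha_ne ha2'
  have hpos : (0:ℝ) < ‖a‖ := by linarith
  rw [Jint, Jint, ← intervalIntegral.integral_sub (integrable_integrand ha2)
    (integrable_integrand ha2')]
  have hb := intervalIntegral.norm_integral_le_of_norm_le_const
    (C := ‖a - (starRingEnd ℂ) a‖ / ‖a‖^2)
    (f := fun t : ℝ => ((Real.sqrt (1 - t^2) : ℂ) * csqrt (1 - (t:ℂ)/a) -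
      (Real.sqrt (1 - t^2) : ℂ) * csqrt (1 - (t:ℂ)/((starRingEnd ℂ) a))))
    (a := (-1:ℝ)) (b := 1) ?_
  · calc _ ≤ ‖a - (starRingEnd ℂ) a‖ / ‖a‖^2 * |1 - (-1:ℝ)| := hb
      _ = 2 * (‖a - (starRingEnd ℂ) a‖ / ‖a‖^2) := by
          rw [show |(1:ℝ) - (-1)| = 2 by norm_num]; ring
  · intro t ht
    rw [Set.uIoc_of_le (by norm_num : (-1:ℝ) ≤ 1)] at ht
    have habs : |t| ≤ 1 := abs_le.mpr ⟨le_of_lt ht.1, ht.2⟩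
    show ‖(Real.sqrt (1 - t^2) : ℂ) * csqrt (1 - (t:ℂ)/a) -
      (Real.sqrt (1 - t^2) : ℂ) * csqrt (1 - (t:ℂ)/((starRingEnd ℂ) a))‖ ≤ _
    rw [← mul_sub, norm_mul, Complex.norm_real]
    have hs1 : ‖Real.sqrt (1 - t^2)‖ ≤ 1 := by
      rw [Real.norm_eq_abs, _root_.abs_of_nonneg (Real.sqrt_nonneg _)]
      have hle : (1 - t^2) ≤ 1 := by nlinarith [_root_.sq_abs t]
      calc Real.sqrt (1 - t^2) ≤ Real.sqrt 1 := Real.sqrt_le_sqrt hle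
        _ = 1 := Real.sqrt_one
    have hdiff : ‖(1 - (t:ℂ)/a) - (1 - (t:ℂ)/((starRingEnd ℂ) a))‖ ≤ ‖a - (starRingEnd ℂ) a‖ / ‖a‖^2 := by
      have hid : (1 - (t:ℂ)/a) - (1 - (t:ℂ)/((starRingEnd ℂ) a)) =
          (t:ℂ) * (a - (starRingEnd ℂ) a) / (a * (starRingEnd ℂ) a) := by
        field_simp
        ring
      rw [hid, norm_div, norm_mul, norm_mul, norm_conj', Complex.norm_real, Real.norm_eq_abs]
      rw [div_le_div_iff₀ (by positivity) (by positivity)]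
      calc |t| * ‖a - (starRingEnd ℂ) a‖ * ‖a‖^2 ≤ 1 * ‖a - (starRingEnd ℂ) a‖ * ‖a‖^2 := by
            apply mul_le_mul_of_nonneg_right (mul_le_mul_of_nonneg_right habs (norm_nonneg _))
              (by positivity)
        _ = ‖a - (starRingEnd ℂ) a‖ * (‖a‖ * ‖a‖) := by ring
    have hs2 : ‖csqrt (1 - (t:ℂ)/a) - csqrt (1 - (t:ℂ)/((starRingEnd ℂ) a))‖ ≤
        ‖a - (starRingEnd ℂ) a‖ / ‖a‖^2 :=
      le_trans (csqrt_diff_le (base_dist habs ha2)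
        (by rw [show ((starRingEnd ℂ) a) = (starRingEnd ℂ) a from rfl]; exact base_dist habs ha2')) hdiff
    calc ‖Real.sqrt (1 - t^2)‖ * ‖csqrt (1 - (t:ℂ)/a) - csqrt (1 - (t:ℂ)/((starRingEnd ℂ) a))‖
        ≤ 1 * (‖a - (starRingEnd ℂ) a‖ / ‖a‖^2) := by
          apply mul_le_mul hs1 hs2 (norm_nonneg _) (by norm_num)
      _ = _ := one_mul _

set_option maxHeartbeats 1000000 in
lemma G_im_ne {a : ℂ} (ha : 16 ≤ ‖a‖) (him : a.im ≠ 0) : (a * Jint a ^ 2).im ≠ 0 := by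
  have ha2 : 2 ≤ ‖a‖ := by linarith
  have ha2' : 2 ≤ ‖(starRingEnd ℂ) a‖ := by rw [norm_conj']; linarith
  have hpos : (0:ℝ) < ‖a‖ := by linarith
  intro him0
  have hGreal : (starRingEnd ℂ) (a * Jint a ^ 2) = a * Jint a ^ 2 :=
    Complex.conj_eq_iff_im.mpr him0
  set X := Jint a with hX
  set Y := Jint ((starRingEnd ℂ) a) with hY
  set b := (starRingEnd ℂ) a with hb
  have heq : b * Y^2 = a * X^2 := by
    rw [← hGreal, map_mul, map_pow, hY, hb, J_conj ha2]
  have hid : (a - b) * X^2 = - (b * ((X - Y) * (X + Y))) := by linear_combination -heq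
  have habne : (0:ℝ) < ‖a - b‖ := by
    rw [norm_pos_iff]
    intro h0
    exact him (Complex.conj_eq_iff_im.mp (sub_eq_zero.mp h0).symm)
  have hpi3 := Real.pi_gt_three
  have hpi315 := Real.pi_lt_d2
  have h8 : 2/‖a‖ ≤ 1/8 := by rw [div_le_iff₀ hpos]; linarith
  have hXd : ‖X - ((Real.pi/2:ℝ):ℂ)‖ ≤ 2/‖a‖ := J_est ha2
  have hYd : ‖Y - ((Real.pi/2:ℝ):ℂ)‖ ≤ 2/‖a‖ := by
    have := J_est ha2'
    rwa [norm_conj'] at this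
  have hπn : ‖((Real.pi/2:ℝ):ℂ)‖ = Real.pi/2 := by
    rw [Complex.norm_real, Real.norm_eq_abs, _root_.abs_of_pos (by positivity)]
  have hXlb : Real.pi/2 - 1/8 ≤ ‖X‖ := by
    have h1 := norm_sub_norm_le ((Real.pi/2:ℝ):ℂ) X
    rw [norm_sub_rev] at h1
    rw [hπn] at h1
    linarith [hXd.trans h8]
  have hXub : ‖X‖ ≤ Real.pi/2 + 1/8 := by
    have h1 := norm_sub_norm_le X ((Real.pi/2:ℝ):ℂ)
    rw [hπn] at h1
    linarith [hXd.trans h8]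
  have hYub : ‖Y‖ ≤ Real.pi/2 + 1/8 := by
    have h1 := norm_sub_norm_le Y ((Real.pi/2:ℝ):ℂ)
    rw [hπn] at h1
    linarith [hYd.trans h8]
  have hXYd : ‖X - Y‖ ≤ 2*(‖a - b‖/‖a‖^2) := J_diff ha
  have hnorm : ‖a - b‖ * ‖X‖^2 = ‖b‖ * (‖X - Y‖ * ‖X + Y‖) := by
    have h1 := congrArg norm hid
    rwa [norm_mul, norm_neg, norm_mul, norm_mul, norm_pow] at h1
  rw [hb, norm_conj'] at hnorm
  have hS : ‖X + Y‖ ≤ Real.pi + 1/4 := le_trans (norm_add_le X Y) (by linarith)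
  have hxy' : ‖X - Y‖ * ‖a‖^2 ≤ 2 * ‖a - b‖ := by
    have h1 : 2*(‖a - b‖/‖a‖^2) * ‖a‖^2 = 2 * ‖a - b‖ := by
      rw [mul_assoc, div_mul_cancel₀ _ (by positivity : ‖a‖^2 ≠ 0)]
    calc ‖X - Y‖ * ‖a‖^2 ≤ 2*(‖a - b‖/‖a‖^2) * ‖a‖^2 := by
          apply mul_le_mul_of_nonneg_right hXYd (by positivity)
      _ = 2 * ‖a - b‖ := h1
  have key2 : ‖a - b‖ * ‖X‖^2 * ‖a‖ = (‖X - Y‖ * ‖a‖^2) * ‖X + Y‖ := by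
    linear_combination ‖a‖ * hnorm
  have key3 : (‖X - Y‖ * ‖a‖^2) * ‖X + Y‖ ≤ (2 * ‖a - b‖) * (Real.pi + 1/4) := by
    apply mul_le_mul hxy' hS (norm_nonneg _) (by positivity)
  have c2 : (Real.pi/2 - 1/8)^2 ≤ ‖X‖^2 := by nlinarith [hXlb, norm_nonneg X]
  have c3 : ‖a - b‖ * ((Real.pi/2 - 1/8)^2 * 16) ≤ ‖a - b‖ * (‖X‖^2 * ‖a‖) := by
    apply mul_le_mul_of_nonneg_left _ habne.le
    apply mul_le_mul c2 ha (by norm_num) (sq_nonneg _)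
  have c4 : 0 < (Real.pi/2 - 1/8)^2 * 16 - 2*(Real.pi + 1/4) := by nlinarith
  nlinarith [c3, key2, key3, mul_pos habne c4]

theorem stmt9 (θ : ℝ) (hθ : θ ∈ Icc (0:ℝ) (Real.pi / 4))
    (q : ℂ → ℝ → ℂ)
    -- `q a` is a continuous branch of `√(p_a)` along `[-1,1]`
    (hqc : ∀ a : ℂ, ContinuousOn (q a) (Icc (-1:ℝ) 1))
    (hqsq : ∀ a : ℂ, ∀ t ∈ Icc (-1:ℝ) 1, (q a t) ^ 2 = pa a (t : ℂ)) :
    -- `(∫_{-1}^1 e^{iθ}√(p_a))² ~ (π²/4) a e^{2iθ}` as `a → ∞`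
    Tendsto
      (fun a : ℂ =>
        (Complex.exp (Complex.I * θ) * ∫ t in (-1:ℝ)..1, q a t) ^ 2 /
          (((Real.pi ^ 2 / 4 : ℝ) : ℂ) * a * Complex.exp (2 * Complex.I * θ)))
      (Bornology.cobounded ℂ) (𝓝 1) ∧
    -- any unbounded arc of `Σ_θ` escapes to `∞` in the direction `arg a → π - 2θ`
    Tendsto Complex.arg
      (Bornology.cobounded ℂ ⊓
        𝓟 {a : ℂ | (Complex.exp (Complex.I * θ) * ∫ t in (-1:ℝ)..1, q a t).re = 0})
      (𝓝 (Real.pi - 2 * θ)) := by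
  have hπpos := Real.pi_pos
  have hpi3 := Real.pi_gt_three
  set Q : ℂ → ℂ := fun a =>
    (Complex.exp (Complex.I * θ) * ∫ t in (-1:ℝ)..1, q a t) ^ 2 /
      (((Real.pi ^ 2 / 4 : ℝ) : ℂ) * a * Complex.exp (2 * Complex.I * θ)) with hQdef
  have hcne : ((Real.pi^2/4 : ℝ) : ℂ) ≠ 0 := by
    simp only [ne_eq, Complex.ofReal_eq_zero]
    positivity
  have hexp2 : Complex.exp (Complex.I * θ) ^ 2 = Complex.exp (2 * Complex.I * θ) := by
    rw [sq, ← Complex.exp_add]; ring_nf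
  have hqint : ∀ a : ℂ, 2 ≤ ‖a‖ →
      ∃ e : ℂ, e^2 = 1 ∧ (∫ t in (-1:ℝ)..1, q a t) = e * (csqrt a * Jint a) :=
    fun a ha => branch_int ha (hqc a) (hqsq a)
  have hnum : ∀ a : ℂ, 2 ≤ ‖a‖ →
      (Complex.exp (Complex.I * θ) * ∫ t in (-1:ℝ)..1, q a t) ^ 2
        = Complex.exp (2 * Complex.I * θ) * (a * Jint a ^ 2) := by
    intro a ha
    obtain ⟨e, he, hint⟩ := hqint a ha
    rw [hint, mul_pow, mul_pow, mul_pow, he, hexp2, csqrt_sq]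
    ring
  have hQeq : ∀ a : ℂ, 2 ≤ ‖a‖ → Q a = Jint a ^ 2 / ((Real.pi^2/4 : ℝ) : ℂ) := by
    intro a ha
    have hane := ha_ne ha
    rw [hQdef]
    simp only
    rw [hnum a ha]
    have hexpne : Complex.exp (2 * Complex.I * θ) ≠ 0 := Complex.exp_ne_zero _
    rw [div_eq_div_iff (mul_ne_zero (mul_ne_zero hcne hane) hexpne) hcne]
    ring
  have hJtend : Tendsto Jint (Bornology.cobounded ℂ) (𝓝 ((Real.pi/2 : ℝ) : ℂ)) := by
    rw [tendsto_iff_norm_sub_tendsto_zero]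
    have hbound : ∀ᶠ a in Bornology.cobounded ℂ, ‖Jint a - ((Real.pi/2:ℝ):ℂ)‖ ≤ 2/‖a‖ := by
      filter_upwards [tendsto_norm_cobounded_atTop.eventually_ge_atTop 2] with a ha
      exact J_est ha
    have h0 : Tendsto (fun a : ℂ => 2/‖a‖) (Bornology.cobounded ℂ) (𝓝 0) :=
      Filter.Tendsto.div_atTop tendsto_const_nhds tendsto_norm_cobounded_atTop
    exact squeeze_zero' (Eventually.of_forall fun a => norm_nonneg _) hbound h0
  have part1 : Tendsto Q (Bornology.cobounded ℂ) (𝓝 1) := by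
    have h1 : Tendsto (fun a : ℂ => Jint a ^ 2 / ((Real.pi^2/4 : ℝ) : ℂ))
        (Bornology.cobounded ℂ) (𝓝 ((((Real.pi/2:ℝ):ℂ))^2 / ((Real.pi^2/4 : ℝ) : ℂ))) :=
      (hJtend.pow 2).div_const _
    have h2 : ((((Real.pi/2:ℝ):ℂ))^2 / ((Real.pi^2/4 : ℝ) : ℂ)) = 1 := by
      rw [div_eq_one_iff_eq hcne]
      push_cast
      ring
    rw [h2] at h1
    apply Filter.Tendsto.congr' _ h1
    filter_upwards [tendsto_norm_cobounded_atTop.eventually_ge_atTop 2] with a ha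
    exact (hQeq a ha).symm
  refine ⟨part1, ?_⟩
  set S := {a : ℂ | (Complex.exp (Complex.I * ↑θ) * ∫ t in (-1:ℝ)..1, q a t).re = 0} with hSdef
  set F := Bornology.cobounded ℂ ⊓ 𝓟 S with hFdef
  have hJne : ∀ a : ℂ, 2 ≤ ‖a‖ → Jint a ≠ 0 := by
    intro a ha h0
    have hd := J_est ha
    rw [h0, zero_sub, norm_neg, Complex.norm_real, Real.norm_eq_abs,
      _root_.abs_of_pos (by positivity : (0:ℝ) < Real.pi/2)] at hd
    have h8 : 2/‖a‖ ≤ 1 := by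
      rw [div_le_one (by linarith : (0:ℝ) < ‖a‖)]; linarith
    linarith
  have hcS : ∀ a : ℂ, 16 ≤ ‖a‖ → a ∈ S →
      ∃ c : ℝ, c < 0 ∧ Complex.exp (2*Complex.I*(θ:ℂ)) * (a * Jint a ^ 2) = (c : ℂ) := by
    intro a ha haS
    have ha2 : 2 ≤ ‖a‖ := by linarith
    have hane := ha_ne ha2
    set z := Complex.exp (Complex.I * (θ:ℂ)) * ∫ t in (-1:ℝ)..1, q a t with hz
    have hzre : z.re = 0 := haS
    have hz2 : z^2 = Complex.exp (2*Complex.I*(θ:ℂ)) * (a * Jint a ^2) := hnum a ha2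
    have hzval : z = (z.im : ℂ) * Complex.I := by
      conv_lhs => rw [← Complex.re_add_im z]
      rw [hzre]
      simp
    have hz2' : z^2 = ((-(z.im^2) : ℝ) : ℂ) := by
      calc z^2 = ((z.im : ℂ) * Complex.I)^2 := by rw [← hzval]
        _ = ((-(z.im^2) : ℝ) : ℂ) := by push_cast; rw [mul_pow, Complex.I_sq]; ring
    refine ⟨-(z.im^2), ?_, by rw [← hz2, hz2']⟩
    have hzne : z ≠ 0 := by
      rw [hz]
      obtain ⟨e, he, hint⟩ := hqint a ha2
      rw [hint]
      apply mul_ne_zero (Complex.exp_ne_zero _)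
      apply mul_ne_zero
      · intro h0; rw [h0] at he; simp at he
      exact mul_ne_zero (csqrt_ne_zero hane) (hJne a ha2)
    have him : z.im ≠ 0 := by
      intro h0
      apply hzne
      rw [hzval, h0]
      simp
    have : 0 < z.im^2 := by positivity
    linarith
  rcases eq_or_lt_of_le hθ.1 with hθ0 | hθpos
  · -- θ = 0
    rw [show Real.pi - 2*θ = Real.pi by rw [← hθ0]; ring]
    apply Filter.Tendsto.congr' _ (tendsto_const_nhds :
      Tendsto (fun _ : ℂ => Real.pi) F (𝓝 Real.pi))
    have hev : ∀ᶠ a in F, Complex.arg a = Real.pi := by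
      rw [hFdef, Filter.eventually_inf_principal]
      filter_upwards [tendsto_norm_cobounded_atTop.eventually_ge_atTop 16] with a ha haS
      obtain ⟨c, hcneg, hceq⟩ := hcS a ha haS
      rw [show (2*Complex.I*(θ:ℂ)) = 0 by rw [← hθ0]; simp, Complex.exp_zero, one_mul] at hceq
      have hGim : (a * Jint a^2).im = 0 := by rw [hceq]; simp
      have him0 : a.im = 0 := by
        by_contra him
        exact G_im_ne ha him hGim
      have ha2 : 2 ≤ ‖a‖ := by linarith
      have hJreal : (Jint a).im = 0 := by
        have hconj : (starRingEnd ℂ) a = a := Complex.conj_eq_iff_im.mpr him0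
        have hJc := J_conj ha2
        rw [hconj] at hJc
        exact Complex.conj_eq_iff_im.mp hJc.symm
      set j := (Jint a).re with hj
      have hJeq : Jint a = ((j : ℝ) : ℂ) := by
        apply Complex.ext <;> simp [hj, hJreal]
      have hjpos : 0 < j := by
        have hd := J_est ha2
        have h8 : 2/‖a‖ ≤ 1/8 := by
          rw [div_le_iff₀ (by linarith : (0:ℝ) < ‖a‖)]; linarith
        have hre : |j - Real.pi/2| ≤ ‖Jint a - ((Real.pi/2:ℝ):ℂ)‖ := by
          have h1 := Complex.abs_re_le_norm (Jint a - ((Real.pi/2:ℝ):ℂ))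
          simpa [Complex.sub_re, hj] using h1
        have := abs_le.mp (hre.trans (hd.trans h8))
        linarith [this.1]
      have hceq2 : c = a.re * j^2 := by
        have h1 := congrArg Complex.re hceq
        rw [hJeq] at h1
        simp [Complex.mul_re, him0, ← Complex.ofReal_pow] at h1
        linarith [h1]
      have hreneg : a.re < 0 := by nlinarith
      have hareal : a = ((a.re : ℝ) : ℂ) := by
        apply Complex.ext <;> simp [him0]
      rw [hareal]
      exact Complex.arg_ofReal_of_neg hreneg
    exact hev.mono fun a h => h.symm
  · -- θ > 0
    set ζ := Complex.exp (((Real.pi - 2*θ : ℝ) : ℂ) * Complex.I) with hζ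
    have hζarg : Complex.arg ζ = Real.pi - 2*θ := by
      rw [hζ, Complex.exp_mul_I]
      exact Complex.arg_cos_add_sin_mul_I ⟨by linarith [hθ.2], by linarith⟩
    have hζmem : ζ ∈ Complex.slitPlane := by
      right
      rw [hζ, Complex.exp_ofReal_mul_I_im, Real.sin_pi_sub]
      exact ne_of_gt (Real.sin_pos_of_pos_of_lt_pi (by linarith) (by linarith [hθ.2]))
    have hQF : Tendsto Q F (𝓝 1) := part1.mono_left inf_le_left
    have hQne : ∀ᶠ a in F, Q a ≠ 0 := hQF.eventually_ne one_ne_zero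
    have hdiv : Tendsto (fun a => ζ / Q a) F (𝓝 ζ) := by
      have h1 := Filter.Tendsto.div (tendsto_const_nhds (x := ζ)) hQF one_ne_zero
      rw [div_one] at h1; exact h1
    have harg : Tendsto (fun a => Complex.arg (ζ / Q a)) F (𝓝 (Real.pi - 2*θ)) := by
      rw [← hζarg]
      exact (Complex.continuousAt_arg hζmem).tendsto.comp hdiv
    apply Filter.Tendsto.congr' _ harg
    have hev16 : ∀ᶠ a in F, 16 ≤ ‖a‖ :=
      (tendsto_norm_cobounded_atTop.eventually_ge_atTop 16).filter_mono inf_le_left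
    have hSmem : S ∈ F := le_principal_iff.mp inf_le_right
    filter_upwards [hev16, hQne, hSmem] with a ha hQa haS
    obtain ⟨c, hcneg, hceq⟩ := hcS a ha haS
    have ha2 : 2 ≤ ‖a‖ := by linarith
    have hane := ha_ne ha2
    have hQval : Q a = Jint a^2 / ((Real.pi^2/4 : ℝ) : ℂ) := hQeq a ha2
    have hζ2 : ζ = - Complex.exp (-(2*Complex.I*(θ:ℂ))) := by
      rw [hζ]
      have h1 : ((Real.pi - 2*θ : ℝ) : ℂ) * Complex.I
          = (Real.pi : ℂ) * Complex.I + (-(2*Complex.I*(θ:ℂ))) := by push_cast; ring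
      rw [h1, Complex.exp_add, Complex.exp_pi_mul_I]
      ring
    have hexpne : Complex.exp (2*Complex.I*(θ:ℂ)) ≠ 0 := Complex.exp_ne_zero _
    have hexpinv : Complex.exp (-(2*Complex.I*(θ:ℂ))) = (Complex.exp (2*Complex.I*(θ:ℂ)))⁻¹ :=
      Complex.exp_neg _
    have hr : (0:ℝ) < -c*(4/Real.pi^2) := by
      apply mul_pos (by linarith) (by positivity)
    have hπc : ((Real.pi:ℝ):ℂ) ≠ 0 := by exact_mod_cast Real.pi_ne_zero
    have hprod : Complex.exp (2*Complex.I*(θ:ℂ)) * Complex.exp (-(2*Complex.I*(θ:ℂ))) = 1 := by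
      rw [← Complex.exp_add]; simp
    have heq2 : a * Jint a ^ 2 = (c:ℂ) * Complex.exp (-(2*Complex.I*(θ:ℂ))) := by
      apply mul_left_cancel₀ hexpne
      rw [hceq]
      linear_combination (-(c:ℂ)) * hprod
    have hkey0 : a * Q a = ((-c*(4/Real.pi^2) : ℝ) : ℂ) * ζ := by
      rw [hQval, hζ2]
      push_cast
      field_simp
      linear_combination heq2
    have hkey : a = ((-c*(4/Real.pi^2) : ℝ) : ℂ) * (ζ / Q a) := by
      rw [← mul_div_assoc, eq_div_iff hQa]
      exact hkey0
    conv_rhs => rw [hkey]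
    rw [Complex.arg_real_mul _ hr]
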